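/- Under gradient descent w(k+1) = w(k) - η Z (O(k) - Y) for the linear model O(k) = Zᵀ w(k) with w(0) = 0, constant gradient matrix Z, G = ZᵀZ positive definite, and 0 < η ≤ 1/λ_max(G), the weight change is bounded for every k by ‖w(k) - w(0)‖₂ ≤ √(Yᵀ G^{-1} Y). -/

import Mathlib

open Matrix


private lemma phi_mul_aux {n : ℕ} (V : Matrix (Fin n) (Fin n) ℝ) (h : Vᴴ * V = 1)
    (d e : Fin n → ℝ) :
    (V * Matrix.diagonal d * Vᴴ) * (V * Matrix.diagonal e * Vᴴ)
      = V * Matrix.diagonal (fun i => d i * e i) * Vᴴ := by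
  simp only [Matrix.mul_assoc]
  rw [← Matrix.mul_assoc Vᴴ V, h, Matrix.one_mul, ← Matrix.mul_assoc (Matrix.diagonal d),
    Matrix.diagonal_mul_diagonal]

private lemma phi_smul_aux {n : ℕ} (V : Matrix (Fin n) (Fin n) ℝ) (a : ℝ) (e : Fin n → ℝ) :
    a • (V * Matrix.diagonal e * Vᴴ) = V * Matrix.diagonal (fun i => a * e i) * Vᴴ := by
  rw [← Matrix.smul_mul, ← Matrix.mul_smul, ← Matrix.diagonal_smul]
  rfl

private lemma phi_sub_aux {n : ℕ} (V : Matrix (Fin n) (Fin n) ℝ) (d e : Fin n → ℝ) :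
    (V * Matrix.diagonal d * Vᴴ) - (V * Matrix.diagonal e * Vᴴ)
      = V * Matrix.diagonal (fun i => d i - e i) * Vᴴ := by
  rw [← Matrix.sub_mul, ← Matrix.mul_sub, ← Matrix.diagonal_sub]

/-- Under gradient descent `w (k+1) = w k - η Z (O k - Y)` for the
linear model `O k = Zᵀ w k`, with `w 0 = 0`, `G = ZᵀZ` positive definite and
`η λ_max(G) ≤ 1` (expressed as `I - η G` PSD), the weight change satisfies
`‖w k - w 0‖₂ ≤ √(Yᵀ G⁻¹ Y)` for every `k`. -/
theorem stmt_8 {m n : ℕ} (Z : Matrix (Fin m) (Fin n) ℝ) (Y : Fin n → ℝ)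
    (G : Matrix (Fin n) (Fin n) ℝ) (hGdef : G = Zᵀ * Z) (hG : G.PosDef)
    (η : ℝ) (hη : 0 < η)
    (hmax : ((1 : Matrix (Fin n) (Fin n) ℝ) - η • G).PosSemidef)
    (w : ℕ → (Fin m → ℝ)) (hw0 : w 0 = 0)
    (O : ℕ → (Fin n → ℝ)) (hO : ∀ k, O k = Zᵀ.mulVec (w k))
    (hrec : ∀ k, w (k + 1) = w k - η • Z.mulVec (O k - Y)) :
    ∀ k, Real.sqrt (∑ r, (w k r - w 0 r) ^ 2) ≤
      Real.sqrt (Y ⬝ᵥ G⁻¹.mulVec Y) := by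
  have hH : G.IsHermitian := hG.1
  set V : Matrix (Fin n) (Fin n) ℝ := (hH.eigenvectorUnitary : Matrix (Fin n) (Fin n) ℝ) with hVdef
  set lam : Fin n → ℝ := hH.eigenvalues with hlamdef
  have hmem := hH.eigenvectorUnitary.2
  rw [Unitary.mem_iff] at hmem
  have hVU : Vᴴ * V = 1 := by
    simpa [Matrix.star_eq_conjTranspose] using hmem.1
  have hUV : V * Vᴴ = 1 := by
    simpa [Matrix.star_eq_conjTranspose] using hmem.2
  have hVT : Vᵀ = Vᴴ := by
    ext i j; simp [Matrix.conjTranspose_apply]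
  set φ : (Fin n → ℝ) → Matrix (Fin n) (Fin n) ℝ :=
    fun d => V * Matrix.diagonal d * Vᴴ with hφdef
  have hGφ : G = φ lam := by
    have := hH.spectral_theorem
    simpa [hφdef, RCLike.ofReal_real_eq_id, Matrix.star_eq_conjTranspose] using this
  have φmul : ∀ d e, φ d * φ e = φ (fun i => d i * e i) := fun d e =>
    phi_mul_aux V hVU d e
  have φone : φ (fun _ => 1) = 1 := by
    simp only [hφdef]
    rw [show Matrix.diagonal (fun _ : Fin n => (1:ℝ)) = 1 from Matrix.diagonal_one,
      mul_one, hUV]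
  -- eigenvalue facts
  have hlam_pos : ∀ i, 0 < lam i := fun i => hG.eigenvalues_pos i
  -- quadratic form computations
  have hVdot : ∀ p q : Fin n → ℝ, (V *ᵥ p) ⬝ᵥ (V *ᵥ q) = p ⬝ᵥ q := by
    intro p q
    rw [Matrix.dotProduct_mulVec, ← Matrix.mulVec_transpose, hVT,
      Matrix.mulVec_mulVec, hVU, Matrix.one_mulVec]
  have φvec : ∀ d y, φ d *ᵥ y = V *ᵥ (fun i => d i * (Vᴴ *ᵥ y) i) := by
    intro d y
    simp only [hφdef]
    rw [← Matrix.mulVec_mulVec, ← Matrix.mulVec_mulVec]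
    exact congrArg (Matrix.mulVec V) (funext fun i =>
      Matrix.mulVec_diagonal d (Vᴴ *ᵥ y) i)
  have key : ∀ a b y, (φ a *ᵥ y) ⬝ᵥ (φ b *ᵥ y)
      = ∑ i, (a i * b i) * ((Vᴴ *ᵥ y) i) ^ 2 := by
    intro a b y
    rw [φvec, φvec, hVdot]
    simp only [dotProduct]
    congr 1; ext i; ring
  -- the matrix form of G⁻¹
  have hGinv : G⁻¹ = φ (fun i => (lam i)⁻¹) := by
    apply Matrix.inv_eq_right_inv
    rw [hGφ, φmul]
    rw [show (fun i => lam i * (lam i)⁻¹) = fun _ => (1:ℝ) by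
      ext i; exact mul_inv_cancel₀ (hlam_pos i).ne']
    exact φone
  -- nonnegativity of 1 - η λᵢ
  set μ : Fin n → ℝ := fun i => 1 - η * lam i with hμdef
  have hφμ : (1 : Matrix (Fin n) (Fin n) ℝ) - η • G = φ μ := by
    rw [hGφ, ← φone]
    simp only [hφdef]
    rw [phi_smul_aux, phi_sub_aux]
  have hμ_nonneg : ∀ i, 0 ≤ μ i := by
    intro i
    have h := hmax.dotProduct_mulVec_nonneg (V *ᵥ Pi.single i 1)
    rw [hφμ] at h
    have hx : Vᴴ *ᵥ (V *ᵥ Pi.single i 1) = Pi.single i 1 := by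
      rw [Matrix.mulVec_mulVec, hVU, Matrix.one_mulVec]
    rw [show star (V *ᵥ Pi.single i 1) = V *ᵥ Pi.single i 1 from rfl] at h
    have h2 : (V *ᵥ Pi.single i 1) ⬝ᵥ (φ μ *ᵥ (V *ᵥ Pi.single i 1)) = μ i := by
      have := key (fun _ => 1) μ (V *ᵥ Pi.single i 1)
      rw [φone, Matrix.one_mulVec] at this
      rw [this, hx]
      rw [Finset.sum_eq_single i]
      · simp
      · intro j _ hj; simp [Pi.single_apply, hj]
      · intro hi; exact absurd (Finset.mem_univ i) hi
    rw [h2] at h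
    exact h
  have hμ_le_one : ∀ i, μ i ≤ 1 := by
    intro i
    have := mul_pos hη (hlam_pos i)
    simp only [hμdef]
    linarith
  -- closed form for w
  set β : ℕ → Fin n → ℝ := fun k i => (1 - μ i ^ k) / lam i with hβdef
  have hwk : ∀ k, w k = Z *ᵥ (φ (β k) *ᵥ Y) := by
    intro k
    induction k with
    | zero =>
      rw [hw0]
      rw [show β 0 = fun _ => (0:ℝ) by ext i; simp [hβdef]]
      rw [show φ (fun _ => (0:ℝ)) = 0 by simp [hφdef]]
      simp
    | succ k ih =>
      rw [hrec k, hO k, ih]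
      rw [Matrix.mulVec_mulVec (φ (β k) *ᵥ Y) Zᵀ Z, ← hGdef]
      have hGv : G *ᵥ (φ (β k) *ᵥ Y) = (φ (fun i => lam i * β k i)) *ᵥ Y := by
        rw [Matrix.mulVec_mulVec Y G (φ (β k)), hGφ, φmul]
      rw [hGv]
      have step : φ (β k) *ᵥ Y - η • ((φ (fun i => lam i * β k i)) *ᵥ Y - Y)
          = φ (β (k+1)) *ᵥ Y := by
        have hβsucc : β (k+1) = fun i => β k i - η * (lam i * β k i - 1) := by
          ext i
          have hl := (hlam_pos i).ne'
          simp only [hβdef, hμdef]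
          field_simp
          ring
        rw [hβsucc]
        have : φ (fun i => β k i - η * (lam i * β k i - 1))
            = φ (β k) - η • (φ (fun i => lam i * β k i) - 1) := by
          rw [← φone]
          simp only [hφdef]
          rw [phi_sub_aux, phi_smul_aux, phi_sub_aux]
        rw [this, Matrix.sub_mulVec, Matrix.smul_mulVec, Matrix.sub_mulVec,
          Matrix.one_mulVec]
      rw [← step, Matrix.mulVec_sub Z (φ (β k) *ᵥ Y)
        (η • (φ (fun i => lam i * β k i) *ᵥ Y - Y)), Matrix.mulVec_smul]
  -- put it together
  intro k
  apply Real.sqrt_le_sqrt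
  have hsum : ∑ r, (w k r - w 0 r) ^ 2 = w k ⬝ᵥ w k := by
    rw [hw0]
    simp [dotProduct, pow_two]
  rw [hsum, hwk k]
  set v : Fin n → ℝ := φ (β k) *ᵥ Y with hvdef
  have h1 : (Z *ᵥ v) ⬝ᵥ (Z *ᵥ v) = v ⬝ᵥ (G *ᵥ v) := by
    rw [hGdef, ← Matrix.mulVec_mulVec, Matrix.dotProduct_mulVec v Zᵀ,
      ← Matrix.mulVec_transpose, Matrix.transpose_transpose]
  rw [h1]
  have h2 : G *ᵥ v = (φ (fun i => lam i * β k i)) *ᵥ Y := by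
    rw [hvdef, Matrix.mulVec_mulVec, hGφ, φmul]
  rw [h2, hvdef, key]
  have h3 : Y ⬝ᵥ G⁻¹ *ᵥ Y = ∑ i, (lam i)⁻¹ * ((Vᴴ *ᵥ Y) i) ^ 2 := by
    rw [hGinv]
    have := key (fun _ => 1) (fun i => (lam i)⁻¹) Y
    rw [φone, Matrix.one_mulVec] at this
    rw [this]
    simp
  rw [h3]
  apply Finset.sum_le_sum
  intro i _
  apply mul_le_mul_of_nonneg_right _ (sq_nonneg _)
  have hl := hlam_pos i
  have hμk : 0 ≤ μ i ^ k := pow_nonneg (hμ_nonneg i) k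
  have hμk1 : μ i ^ k ≤ 1 := pow_le_one₀ (hμ_nonneg i) (hμ_le_one i)
  have hsq : (1 - μ i ^ k) ^ 2 ≤ 1 := by nlinarith
  have : β k i * (lam i * β k i) = (1 - μ i ^ k) ^ 2 / lam i := by
    simp only [hβdef]
    field_simp
  rw [this]
  rw [div_le_iff₀ hl, inv_mul_cancel₀ hl.ne'] at *
  exact hsq
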